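/- The chromatic symmetric function of the path P_n on n vertices satisfies X_{P_n} = Σ_{I ⊨ n} w_I e_I, where for I = i_1 i_2 ⋯ i_z we set w_I = i_1 (i_2 − 1)(i_3 − 1) ⋯ (i_z − 1). -/

import Mathlib

open scoped Classical
open MvPolynomial Finset

noncomputable section

/-- `σ⁺_I(a)`: the minimal partial sum of `I` that is at least `a`. -/
def sigmaP (I : List ℕ) (a : ℝ) : ℝ :=
  sInf {x : ℝ | ∃ k ≤ I.length, x = ((I.take k).sum : ℝ) ∧ a ≤ x}

/-- `Θ⁺_I(a) = σ⁺_I(a) − a`. -/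
def thetaP (I : List ℕ) (a : ℝ) : ℝ := sigmaP I a - a

/-- `σ⁻_I(a)`: the maximal partial sum of `I` that is at most `a`. -/
def sigmaM (I : List ℕ) (a : ℝ) : ℝ :=
  sSup {x : ℝ | ∃ k ≤ I.length, x = ((I.take k).sum : ℝ) ∧ x ≤ a}

/-- `Θ⁻_I(a) = a − σ⁻_I(a)`. -/
def thetaM (I : List ℕ) (a : ℝ) : ℝ := a - sigmaM I a

/-- `w_I = i₁(i₂−1)⋯(i_z−1)`. -/
def wI : List ℕ → ℕ
  | [] => 1
  | i :: t => i * (t.map (· - 1)).prod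

/-- `e_I`: the product of elementary symmetric polynomials indexed by the parts of `I`,
in `N` variables. -/
def eComp (N : ℕ) (I : List ℕ) : MvPolynomial (Fin N) ℝ :=
  (I.map fun i => MvPolynomial.esymm (Fin N) ℝ i).prod

/-- The chromatic symmetric function of a graph, truncated to `N` variables. -/
def csf {V : Type} [Fintype V] (G : SimpleGraph V) (N : ℕ) : MvPolynomial (Fin N) ℝ :=
  ∑ κ : V → Fin N,
    if ∀ u v, G.Adj u v → κ u ≠ κ v then ∏ v, MvPolynomial.X (κ v) else 0

/-- Add a single edge `uv` to a graph. -/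
def addE {V : Type} (G : SimpleGraph V) (u v : V) : SimpleGraph V :=
  G ⊔ SimpleGraph.fromRel fun x y => x = u ∧ y = v

/-- The list of consecutive pairs of a list of vertices. -/
def chainE (l : List ℕ) : List (ℕ × ℕ) := l.zip l.tail

/-- The simple graph on `Fin n` with the given list of edges. -/
def graphOfEdges (n : ℕ) (E : List (ℕ × ℕ)) : SimpleGraph (Fin n) :=
  SimpleGraph.fromRel fun u v => ((u : ℕ), (v : ℕ)) ∈ E

/-- The path on `n` vertices. -/
def pathG (n : ℕ) : SimpleGraph (Fin n) := graphOfEdges n (chainE (List.range n))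

/-- The cycle on `n` vertices. -/
def cycleG (n : ℕ) : SimpleGraph (Fin n) :=
  graphOfEdges n (chainE (List.range n ++ [0]))

/-- The tadpole `C_a^l`: a cycle on `a` vertices with a path of `l` edges attached. -/
def tadpoleG (a l : ℕ) : SimpleGraph (Fin (a + l)) :=
  graphOfEdges (a + l)
    (chainE (List.range a ++ [0]) ++ chainE (0 :: (List.range l).map (· + a)))

/-- The theta graph `θ_{abc}`: two vertices (`0` and `a+b+c-2`) joined by three internally
disjoint paths of lengths `a`, `b`, `c`. -/
def thetaG (a b c : ℕ) : SimpleGraph (Fin (a + b + c - 1)) :=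
  graphOfEdges (a + b + c - 1)
    (chainE (0 :: ((List.range (a - 1)).map (· + 1) ++ [a + b + c - 2])) ++
     chainE (0 :: ((List.range (b - 1)).map (· + a) ++ [a + b + c - 2])) ++
     chainE (0 :: ((List.range (c - 1)).map (· + (a + b - 1)) ++ [a + b + c - 2])))

/-- The index `p` defined by `m = i₁ + ⋯ + i_{p-1} + s` with `1 ≤ s ≤ i_p`:
the least `k` with `i₁ + ⋯ + i_k ≥ m`. -/
def pIdx (I : List ℕ) (m : ℕ) : ℕ := sInf {k | m ≤ (I.take k).sum}

/-- The number `s` defined by `m = i₁ + ⋯ + i_{p-1} + s` with `1 ≤ s ≤ i_p`. -/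
def sVal (I : List ℕ) (m : ℕ) : ℕ := m - (I.take (pIdx I m - 1)).sum

/-- The index `q` defined by `m = i₂ + ⋯ + i_q + t` with `1 ≤ t ≤ i_{q+1}`
(convention `i_{z+1} = i₁`). -/
def qIdx (I : List ℕ) (m : ℕ) : ℕ := sInf {k | m ≤ ((I.tail ++ I.take 1).take k).sum}

/-- The number `t` defined by `m = i₂ + ⋯ + i_q + t` with `1 ≤ t ≤ i_{q+1}`. -/
def tVal (I : List ℕ) (m : ℕ) : ℕ := m - ((I.tail ++ I.take 1).take (qIdx I m - 1)).sum

/-- The part `i_p`. -/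
def ipPart (I : List ℕ) (m : ℕ) : ℕ := I.getD (pIdx I m - 1) 0

/-- The second elementary symmetric polynomial evaluated on a list. -/
def e2 : List ℕ → ℤ
  | [] => 0
  | x :: t => (x : ℤ) * t.sum + e2 t

/-- The cycle-chord coefficient `Δ_I(m)`. -/
def DeltaI (I : List ℕ) (m : ℕ) : ℤ :=
  if (I.headI : ℤ) ≤ (ipPart I m : ℤ) - sVal I m then
    (sVal I m : ℤ) * ((ipPart I m : ℤ) - sVal I m - I.headI)
  else
    e2 ((ipPart I m - sVal I m) ::
        ((I.drop (pIdx I m)).take (qIdx I m - pIdx I m) ++ [tVal I m]))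

/-- The length of the prefix `P` in the decomposition `I = PQ`, where `Q` is the shortest
suffix of `I` with `|Q| ≥ a`. -/
def kPhi (a : ℕ) (I : List ℕ) : ℕ := sSup {j | j ≤ I.length ∧ a ≤ (I.drop j).sum}

/-- The transformation `φ`: writing `I = PQ` with `Q` the shortest suffix of modulus `≥ a`,
`φ(I) = I` if `Q = I`, and otherwise `φ(I) = i₁ · reverse(P∖i₁) · Q`. -/
def phi (a : ℕ) (I : List ℕ) : List ℕ :=
  if kPhi a I = 0 then I
  else I.take 1 ++ ((I.drop 1).take (kPhi a I - 1)).reverse ++ I.drop (kPhi a I)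

/-- The starting position of the longest suffix `R_I` of `I` of modulus `≤ a`. -/
def rIdx (a : ℕ) (I : List ℕ) : ℕ := sInf {j | (I.drop j).sum ≤ a}

/-- The partial reversal `ψ(I) = reverse(L_I) R_I`, where `R_I` is the longest suffix of `I`
of modulus `≤ a` and `L_I` is the complementary prefix. -/
def psi (a : ℕ) (I : List ℕ) : List ℕ :=
  (I.take (rIdx a I)).reverse ++ I.drop (rIdx a I)

/-- The clock coefficient `D_I = Θ⁺_I(2) − Θ⁻_{reverse(φ(I))}(a) + Δ_I(b+1)`. -/
def DI (a b : ℕ) (I : List ℕ) : ℝ :=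
  thetaP I 2 - thetaM (phi a I).reverse a + (DeltaI I (b + 1) : ℝ)

end


noncomputable section
-- chain lemma
lemma zip_range' : ∀ (m s : ℕ), (List.range' s m).zip (List.range' s m).tail
    = (List.range' s (m-1)).map (fun i => (i, i+1))
  | 0, s => rfl
  | 1, s => rfl
  | (m+2), s => by
    have h0 : List.range' s (m+2) = s :: List.range' (s+1) (m+1) := List.range'_succ
    have h1 : List.range' (s+1) (m+1) = (s+1) :: List.range' (s+2) m := List.range'_succ
    have IH := zip_range' (m+1) (s+1)
    rw [h1] at IH
    simp only [List.tail_cons] at IH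
    rw [h0]
    simp only [List.tail_cons]
    rw [h1, List.zip_cons_cons, IH]
    have h2 : List.range' s (m+2-1) = s :: List.range' (s+1) m := List.range'_succ
    rw [h2, List.map_cons]
    norm_num

lemma mem_chainE_range {n a b : ℕ} : ((a,b) ∈ chainE (List.range n)) ↔ b = a + 1 ∧ b < n := by
  rw [chainE, List.range_eq_range', zip_range', ← List.range_eq_range']
  simp only [List.mem_map, List.mem_range, Prod.mk.injEq]
  constructor
  · rintro ⟨i, hi, rfl, rfl⟩; omega
  · rintro ⟨rfl, h⟩; exact ⟨a, by omega, rfl, rfl⟩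

lemma pathG_adj {n : ℕ} (u v : Fin n) :
    (pathG n).Adj u v ↔ ((v:ℕ) = (u:ℕ)+1 ∨ (u:ℕ) = (v:ℕ)+1) := by
  simp only [pathG, graphOfEdges, SimpleGraph.fromRel_adj, mem_chainE_range, ne_eq,
    Fin.ext_iff]
  have := u.isLt; have := v.isLt
  constructor
  · rintro ⟨h, h2⟩; omega
  · intro h; omega

end

namespace Aux
noncomputable section
variable (N : ℕ)

def ee (k : ℕ) : MvPolynomial (Fin N) ℝ := esymm (Fin N) ℝ k
def pp (k : ℕ) : MvPolynomial (Fin N) ℝ := psum (Fin N) ℝ k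

/-- Properness predicate for path colorings. -/
def Qp (n : ℕ) (κ : Fin n → Fin N) : Prop :=
  ∀ (i : ℕ) (h : i + 1 < n), κ ⟨i, Nat.lt_of_succ_lt h⟩ ≠ κ ⟨i+1, h⟩

def W (n : ℕ) : MvPolynomial (Fin N) ℝ :=
  ∑ κ : Fin n → Fin N, if Qp N n κ then ∏ v, X (κ v) else 0

def Wc (n : ℕ) (c : Fin N) : MvPolynomial (Fin N) ℝ :=
  ∑ κ : Fin (n+1) → Fin N, if Qp N (n+1) κ ∧ κ 0 = c then ∏ v, X (κ v) else 0

lemma csf_path (n : ℕ) : csf (pathG n) N = W N n := by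
  unfold csf W
  apply Finset.sum_congr
  · congr!
  · intro κ _
    congr 1
    simp only [eq_iff_iff]
    constructor
    · intro h i hi
      exact h _ _ ((pathG_adj _ _).2 (Or.inl rfl))
    · intro h u v hadj
      rcases (pathG_adj u v).1 hadj with hv | hu
      · have h2 := h u.val (hv ▸ v.isLt)
        convert h2 using 2 <;> simp [Fin.ext_iff, hv]
      · have h2 := h v.val (hu ▸ u.isLt)
        refine Ne.symm ?_
        convert h2 using 2 <;> simp [Fin.ext_iff, hu]

lemma W_zero : W N 0 = 1 := by
  simp [W, Qp]

lemma cons_mk_succ {n : ℕ} (c : Fin N) (κ : Fin n → Fin N) (i : ℕ) (h : i + 1 < n + 1) :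
    (Fin.cons c κ : Fin (n+1) → Fin N) ⟨i+1, h⟩ = κ ⟨i, Nat.lt_of_succ_lt_succ h⟩ := by
  have e : (⟨i+1, h⟩ : Fin (n+1)) = Fin.succ ⟨i, Nat.lt_of_succ_lt_succ h⟩ := by
    ext; simp
  rw [e, Fin.cons_succ]

lemma Qp_cons {n : ℕ} (c : Fin N) (κ : Fin n → Fin N) :
    Qp N (n+1) (Fin.cons c κ) ↔ (∀ h : 0 < n, c ≠ κ ⟨0, h⟩) ∧ Qp N n κ := by
  constructor
  · intro H
    constructor
    · intro h
      have := H 0 (by omega)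
      rwa [show (⟨0, by omega⟩ : Fin (n+1)) = 0 from rfl, Fin.cons_zero, cons_mk_succ] at this
    · intro i h
      have := H (i+1) (by omega)
      rwa [cons_mk_succ, cons_mk_succ] at this
  · rintro ⟨h1, h2⟩ i h
    match i with
    | 0 =>
      rw [show (⟨0, by omega⟩ : Fin (n+1)) = 0 from rfl, Fin.cons_zero, cons_mk_succ]
      exact h1 (by omega)
    | (j+1) =>
      rw [cons_mk_succ, cons_mk_succ]
      exact h2 j (by omega)

lemma sum_cons_split {β : Type*} [AddCommMonoid β] (n : ℕ) (g : (Fin (n+1) → Fin N) → β) :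
    ∑ κ : Fin (n+1) → Fin N, g κ = ∑ c : Fin N, ∑ κ : Fin n → Fin N, g (Fin.cons c κ) := by
  rw [← Equiv.sum_comp (Fin.consEquiv (fun _ : Fin (n+1) => Fin N)) g, Fintype.sum_prod_type]
  rfl

lemma prod_X_cons {n : ℕ} (c : Fin N) (κ : Fin n → Fin N) :
    (∏ v : Fin (n+1), X (R := ℝ) ((Fin.cons c κ : Fin (n+1) → Fin N) v))
      = X c * ∏ v : Fin n, X (κ v) := by
  rw [Fin.prod_univ_succ]
  simp

lemma W_succ (n : ℕ) : W N (n+1) = ∑ c : Fin N, Wc N n c := by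
  simp only [W, Wc]
  rw [Finset.sum_comm]
  refine Finset.sum_congr rfl fun κ _ => ?_
  by_cases h : Qp N (n+1) κ
  · simp [h, Finset.sum_ite_eq]
  · simp [h]
lemma Wc_zero (c : Fin N) : Wc N 0 c = X c := by
  rw [Wc, ← Equiv.sum_comp (Equiv.funUnique (Fin 1) (Fin N)).symm]
  have : ∀ d : Fin N, (Qp N 1 ((Equiv.funUnique (Fin 1) (Fin N)).symm d) ∧
      ((Equiv.funUnique (Fin 1) (Fin N)).symm d) 0 = c) ↔ d = c := by
    intro d
    constructor
    · rintro ⟨-, h⟩; exact h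
    · rintro rfl
      exact ⟨fun i h => by omega, rfl⟩
  rw [Finset.sum_congr rfl (fun d _ => if_congr (this d) rfl rfl)]
  have : ∀ d : Fin N, (∏ v : Fin 1, X (R := ℝ) (((Equiv.funUnique (Fin 1) (Fin N)).symm d) v))
      = X d := by
    intro d; simp
  rw [Finset.sum_congr rfl (fun d _ => by rw [this d])]
  simp [Finset.sum_ite_eq]

lemma Wc_succ (n : ℕ) (c : Fin N) :
    Wc N (n+1) c = X c * (W N (n+1) - Wc N n c) := by
  rw [Wc, sum_cons_split]
  have step1 : ∀ d : Fin N,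
      (∑ κ : Fin (n+1) → Fin N,
        if Qp N (n+2) (Fin.cons d κ) ∧ (Fin.cons d κ : Fin (n+2) → Fin N) 0 = c
        then ∏ v : Fin (n+2), X (R := ℝ) ((Fin.cons d κ : Fin (n+2) → Fin N) v) else 0)
      = if d = c then
          ∑ κ : Fin (n+1) → Fin N,
            if (d ≠ κ ⟨0, Nat.succ_pos n⟩) ∧ Qp N (n+1) κ
            then X d * ∏ v : Fin (n+1), X (κ v) else 0
        else 0 := by
    intro d
    by_cases hd : d = c
    · subst hd
      rw [if_pos rfl]
      refine Finset.sum_congr rfl fun κ _ => ?_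
      rw [prod_X_cons]
      refine if_congr ?_ rfl rfl
      rw [Qp_cons]
      simp only [Fin.cons_zero, and_true]
      constructor
      · rintro ⟨h1, h2⟩; exact ⟨h1 (Nat.succ_pos n), h2⟩
      · rintro ⟨h1, h2⟩; exact ⟨fun _ => h1, h2⟩
    · rw [if_neg hd]
      refine Finset.sum_eq_zero fun κ _ => ?_
      rw [if_neg]
      rintro ⟨-, h⟩
      rw [Fin.cons_zero] at h
      exact hd h
  rw [Finset.sum_congr rfl (fun d _ => step1 d), Finset.sum_ite_eq' Finset.univ c, if_pos (Finset.mem_univ c)]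
  have split : ∀ κ : Fin (n+1) → Fin N,
      (if (c ≠ κ ⟨0, Nat.succ_pos n⟩) ∧ Qp N (n+1) κ
        then X (R := ℝ) c * ∏ v : Fin (n+1), X (κ v) else 0)
      = X c * ((if Qp N (n+1) κ then ∏ v : Fin (n+1), X (κ v) else 0)
          - (if Qp N (n+1) κ ∧ κ 0 = c then ∏ v : Fin (n+1), X (κ v) else 0)) := by
    intro κ
    have h0 : (⟨0, Nat.succ_pos n⟩ : Fin (n+1)) = 0 := rfl
    by_cases hq : Qp N (n+1) κ
    · by_cases hc : κ 0 = c
      · rw [if_neg (by rw [h0, hc]; tauto), if_pos hq, if_pos ⟨hq, hc⟩]; ring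
      · rw [if_pos ⟨by rw [h0]; exact fun h => hc h.symm, hq⟩, if_pos hq,
          if_neg (by tauto)]; ring
    · rw [if_neg (by tauto), if_neg hq, if_neg (by tauto)]; ring
  rw [Finset.sum_congr rfl (fun κ _ => split κ), ← Finset.mul_sum, Finset.sum_sub_distrib]
  rw [W, Wc]

lemma Wc_formula (n : ℕ) (c : Fin N) :
    Wc N n c = ∑ k ∈ Finset.range (n+1), (-1)^k * (X c)^(k+1) * W N (n-k) := by
  induction n with
  | zero => simp [Wc_zero, W_zero]
  | succ n ih =>
    rw [Wc_succ, ih]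
    conv_rhs => rw [Finset.sum_range_succ']
    rw [mul_sub, Finset.mul_sum]
    have : ∀ k ∈ Finset.range (n+1),
        X (R := ℝ) c * ((-1)^k * (X c)^(k+1) * W N (n-k))
        = -((-1)^(k+1) * (X c)^(k+1+1) * W N (n+1-(k+1))) := by
      intro k hk
      have : n + 1 - (k+1) = n - k := by omega
      rw [this]; ring
    rw [Finset.sum_congr rfl this, Finset.sum_neg_distrib]
    simp only [pow_zero, one_mul, pow_one, Nat.sub_zero]
    ring

lemma W_rec (n : ℕ) :
    W N (n+1) = ∑ k ∈ Finset.range (n+1), (-1)^k * pp N (k+1) * W N (n-k) := by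
  rw [W_succ]
  rw [Finset.sum_congr rfl (fun c _ => Wc_formula N n c), Finset.sum_comm]
  refine Finset.sum_congr rfl fun k _ => ?_
  rw [pp, psum, Finset.mul_sum, Finset.sum_mul]
  all_goals exact Finset.sum_congr rfl fun c _ => by ring

def Zs : ℕ → MvPolynomial (Fin N) ℝ
  | 0 => 1
  | (n+1) => ∑ k ∈ Finset.range (n+1), (-1)^k * pp N (k+1) * Zs (n - k)
decreasing_by exact Nat.lt_succ_of_le (Nat.sub_le n k)

lemma W_eq_Z : ∀ n, W N n = Zs N n := by
  intro n
  induction n using Nat.strong_induction_on with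
  | _ n ih =>
    match n with
    | 0 => rw [W_zero, Zs]
    | (n+1) =>
      rw [W_rec, Zs]
      refine Finset.sum_congr rfl fun k hk => ?_
      rw [ih (n-k) (by omega)]

def consComp (n : ℕ) (x : Σ k : Fin (n+1), Composition (n - (k:ℕ))) : Composition (n+1) where
  blocks := ((x.1 : ℕ)+1) :: x.2.blocks
  blocks_pos := by
    intro i hi
    rcases List.mem_cons.1 hi with rfl | h
    · omega
    · exact x.2.blocks_pos h
  blocks_sum := by
    have h := x.2.blocks_sum
    have h2 := x.1.isLt
    simp only [List.sum_cons, h]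
    omega

lemma consComp_bij (n : ℕ) : Function.Bijective (consComp n) := by
  constructor
  · rintro ⟨k, J⟩ ⟨k', J'⟩ h
    have hb := congrArg Composition.blocks h
    simp only [consComp, List.cons.injEq] at hb
    obtain ⟨hk, hJ⟩ := hb
    have hk' : k = k' := Fin.ext (by omega)
    subst hk'
    rw [Composition.ext_iff.2 hJ]
  · intro I
    obtain ⟨b, hpos, hsum⟩ := I
    cases b with
    | nil => simp at hsum
    | cons a t =>
      have ha : 0 < a := hpos (List.mem_cons_self : a ∈ a :: t)
      have hsum' : a + t.sum = n + 1 := by simpa using hsum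
      refine ⟨⟨⟨a-1, by omega⟩, ⟨t, fun h => hpos (List.mem_cons_of_mem a h), by
        simp only; omega⟩⟩, ?_⟩
      apply Composition.ext
      simp only [consComp]
      congr 1
      omega

lemma comp_sum_succ {β : Type*} [AddCommMonoid β] (n : ℕ) (f : List ℕ → β) :
    ∑ I : Composition (n+1), f I.blocks
      = ∑ k ∈ Finset.range (n+1), ∑ J : Composition (n-k), f ((k+1) :: J.blocks) := by
  rw [← Fintype.sum_bijective (consComp n) (consComp_bij n)
      (fun x => f (((x.1 : ℕ)+1) :: x.2.blocks)) (fun I => f I.blocks) (fun x => rfl)]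
  rw [← Finset.univ_sigma_univ, Finset.sum_sigma]
  exact Fin.sum_univ_eq_sum_range (fun k => ∑ J : Composition (n-k), f ((k+1) :: J.blocks)) (n+1)

def wq (l : List ℕ) : ℕ := (l.map (· - 1)).prod

def Rp (n : ℕ) : MvPolynomial (Fin N) ℝ :=
  ∑ I : Composition n, C (wq I.blocks : ℝ) * eComp N I.blocks

def Rr (n : ℕ) : MvPolynomial (Fin N) ℝ :=
  ∑ I : Composition n, C (wI I.blocks : ℝ) * eComp N I.blocks

lemma comp_zero_blocks (I : Composition 0) : I.blocks = [] := by
  cases h : I.blocks with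
  | nil => rfl
  | cons a t =>
    have h1 := I.blocks_pos (h ▸ (List.mem_cons_self : a ∈ a :: t))
    have h2 := I.blocks_sum
    rw [h] at h2
    simp at h2
    omega

lemma Rp_zero : Rp N 0 = 1 := by
  haveI : Subsingleton (Composition 0) :=
    ⟨fun a b => Composition.ext (by rw [comp_zero_blocks, comp_zero_blocks])⟩
  rw [Rp, Fintype.sum_subsingleton _ (default : Composition 0), comp_zero_blocks]
  simp [wq, eComp]

lemma Rp_succ (n : ℕ) : Rp N (n+1)
    = ∑ k ∈ Finset.range (n+1), C (k : ℝ) * esymm (Fin N) ℝ (k+1) * Rp N (n-k) := by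
  rw [Rp, comp_sum_succ n (fun l => C (wq l : ℝ) * eComp N l)]
  refine Finset.sum_congr rfl fun k hk => ?_
  rw [Rp, Finset.mul_sum]
  refine Finset.sum_congr rfl fun J _ => ?_
  have h1 : wq ((k+1) :: J.blocks) = k * wq J.blocks := by simp [wq]
  have h2 : eComp N ((k+1) :: J.blocks) = esymm (Fin N) ℝ (k+1) * eComp N J.blocks := by
    simp [eComp]
  rw [h1, h2, Nat.cast_mul, map_mul]
  ring

lemma Rr_succ (n : ℕ) : Rr N (n+1)
    = ∑ k ∈ Finset.range (n+1), C ((k : ℝ)+1) * esymm (Fin N) ℝ (k+1) * Rp N (n-k) := by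
  rw [Rr, comp_sum_succ n (fun l => C (wI l : ℝ) * eComp N l)]
  refine Finset.sum_congr rfl fun k hk => ?_
  rw [Rp, Finset.mul_sum]
  refine Finset.sum_congr rfl fun J _ => ?_
  have h1 : wI ((k+1) :: J.blocks) = (k+1) * wq J.blocks := by simp [wI, wq]
  have h2 : eComp N ((k+1) :: J.blocks) = esymm (Fin N) ℝ (k+1) * eComp N J.blocks := by
    simp [eComp]
  rw [h1, h2, Nat.cast_mul, map_mul]
  push_cast
  ring

lemma newton' (m : ℕ) :
    ∑ j ∈ Finset.range m, (-1 : MvPolynomial (Fin N) ℝ)^j * psum (Fin N) ℝ (j+1)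
        * esymm (Fin N) ℝ (m-1-j)
      = (m : MvPolynomial (Fin N) ℝ) * esymm (Fin N) ℝ m := by
  have h := MvPolynomial.mul_esymm_eq_sum (Fin N) ℝ m
  have stepA : (∑ a ∈ Finset.HasAntidiagonal.antidiagonal m with a.1 < m,
        (-1 : MvPolynomial (Fin N) ℝ)^a.1 * esymm (Fin N) ℝ a.1 * psum (Fin N) ℝ a.2)
      = ∑ i ∈ Finset.range m,
        (-1 : MvPolynomial (Fin N) ℝ)^i * esymm (Fin N) ℝ i * psum (Fin N) ℝ (m-i) := by
    rw [Finset.sum_filter, Finset.Nat.sum_antidiagonal_eq_sum_range_succ_mk,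
      Finset.sum_range_succ, if_neg (lt_irrefl m), add_zero]
    exact Finset.sum_congr rfl fun i hi => if_pos (Finset.mem_range.1 hi)
  rw [stepA] at h
  have stepB : (∑ j ∈ Finset.range m, (-1 : MvPolynomial (Fin N) ℝ)^j * psum (Fin N) ℝ (j+1)
        * esymm (Fin N) ℝ (m-1-j))
      = ∑ j ∈ Finset.range m,
        (-1 : MvPolynomial (Fin N) ℝ)^(m-1-j) * psum (Fin N) ℝ (m-j) * esymm (Fin N) ℝ (j) := by
    rw [← Finset.sum_range_reflect]
    refine Finset.sum_congr rfl fun j hj => ?_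
    have hj' := Finset.mem_range.1 hj
    have e1 : m - 1 - (m - 1 - j) = j := by omega
    have e2 : m - 1 - j + 1 = m - j := by omega
    rw [e1, e2]
  rw [stepB, h, Finset.mul_sum]
  refine Finset.sum_congr rfl fun j hj => ?_
  have hj' := Finset.mem_range.1 hj
  have e3 : m + 1 + j = (m-1-j) + 2*(j+1) := by omega
  rw [show ((-1 : MvPolynomial (Fin N) ℝ)^(m+1) * ((-1)^j * esymm (Fin N) ℝ j
      * psum (Fin N) ℝ (m-j))) = (-1)^(m+1+j) * esymm (Fin N) ℝ j * psum (Fin N) ℝ (m-j) from by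
    rw [pow_add]; ring]
  rw [e3, pow_add, pow_mul, neg_one_sq, one_pow, mul_one]
  ring

lemma triangle {β : Type*} [AddCommMonoid β] (F : ℕ → ℕ → β) (n : ℕ) :
    ∑ j ∈ Finset.range (n+1), ∑ a ∈ Finset.range (n+1-j), F j a
      = ∑ m ∈ Finset.range (n+1), ∑ j ∈ Finset.range (m+1), F j (m-j) := by
  induction n with
  | zero => simp
  | succ n ih =>
    rw [Finset.sum_range_succ (fun m => ∑ j ∈ Finset.range (m+1), F j (m-j)) (n+1), ← ih,
      Finset.sum_range_succ (fun j => ∑ a ∈ Finset.range (n+1+1-j), F j a) (n+1)]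
    have h1 : ∀ j ∈ Finset.range (n+1), (∑ a ∈ Finset.range (n+1+1-j), F j a)
        = ∑ a ∈ Finset.range (n+1-j), F j a + F j (n+1-j) := by
      intro j hj
      have e : n+1+1-j = (n+1-j)+1 := by have := Finset.mem_range.1 hj; omega
      rw [e, Finset.sum_range_succ]
    rw [Finset.sum_congr rfl h1, Finset.sum_add_distrib]
    have h2 : (∑ a ∈ Finset.range (n+1+1-(n+1)), F (n+1) a) = F (n+1) 0 := by
      have e : n+1+1-(n+1) = 1 := by omega
      rw [e, Finset.sum_range_one]
    rw [h2, Finset.sum_range_succ (fun j => F j (n+1-j)) (n+1)]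
    have e : n+1-(n+1) = 0 := by omega
    rw [e]
    rw [add_assoc]

lemma pp_def (k : ℕ) : pp N k = psum (Fin N) ℝ k := rfl
lemma ee_def (k : ℕ) : ee N k = esymm (Fin N) ℝ k := rfl

def U (n : ℕ) : MvPolynomial (Fin N) ℝ := ∑ a ∈ Finset.range (n+1), ee N a * Rp N (n-a)

lemma U_eq_Z : ∀ n, U N n = Zs N n := by
  intro n
  induction n using Nat.strong_induction_on with
  | _ n ih =>
    match n with
    | 0 =>
      rw [U, Zs]
      simp [ee, Rp_zero, MvPolynomial.esymm_zero]
    | (n+1) =>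
      rw [Zs]
      have h1 : ∀ j ∈ Finset.range (n+1),
          (-1 : MvPolynomial (Fin N) ℝ)^j * pp N (j+1) * Zs N (n-j)
          = ∑ a ∈ Finset.range (n+1-j), (-1)^j * pp N (j+1) * (ee N a * Rp N (n-j-a)) := by
        intro j hj
        rw [← ih (n-j) (by omega), U, Finset.mul_sum]
        have : n - j + 1 = n + 1 - j := by
          have := Finset.mem_range.1 hj; omega
        rw [this]
      rw [Finset.sum_congr rfl h1,
        triangle (fun j a => (-1)^j * pp N (j+1) * (ee N a * Rp N (n-j-a))) n]
      have h2 : ∀ m ∈ Finset.range (n+1),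
          (∑ j ∈ Finset.range (m+1), (-1 : MvPolynomial (Fin N) ℝ)^j * pp N (j+1)
            * (ee N (m-j) * Rp N (n-j-(m-j))))
          = ((m+1 : ℕ) : MvPolynomial (Fin N) ℝ) * ee N (m+1) * Rp N (n-m) := by
        intro m hm
        have : ∀ j ∈ Finset.range (m+1),
            (-1 : MvPolynomial (Fin N) ℝ)^j * pp N (j+1) * (ee N (m-j) * Rp N (n-j-(m-j)))
            = ((-1)^j * pp N (j+1) * ee N ((m+1)-1-j)) * Rp N (n-m) := by
          intro j hj
          have hj' := Finset.mem_range.1 hj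
          have e1 : n - j - (m - j) = n - m := by omega
          have e2 : m + 1 - 1 - j = m - j := by omega
          rw [e1, e2]; ring
        rw [Finset.sum_congr rfl this, ← Finset.sum_mul]
        simp only [pp_def, ee_def]
        rw [newton' N (m+1)]
        try ring
      rw [Finset.sum_congr rfl h2]
      have expand : ∀ m ∈ Finset.range (n+1),
          ((m+1 : ℕ) : MvPolynomial (Fin N) ℝ) * ee N (m+1) * Rp N (n-m)
          = ee N (m+1) * Rp N (n-m) + C (m : ℝ) * esymm (Fin N) ℝ (m+1) * Rp N (n-m) := by
        intro m hm
        have : ((m+1 : ℕ) : MvPolynomial (Fin N) ℝ) = C (m : ℝ) + 1 := by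
          push_cast
          try rw [map_natCast (C : ℝ →+* MvPolynomial (Fin N) ℝ)]
          try push_cast
          try ring
        rw [this]
        try simp only [ee_def]
        try ring
      rw [Finset.sum_congr rfl expand, Finset.sum_add_distrib, ← Rp_succ]
      rw [U, Finset.sum_range_succ']
      simp only [ee, MvPolynomial.esymm_zero, one_mul, Nat.sub_zero]
      refine congrArg₂ (· + ·) ?_ rfl
      refine Finset.sum_congr rfl fun k hk => ?_
      have e : n + 1 - (k+1) = n - k := by omega
      rw [e]

lemma Rr_eq_Z (n : ℕ) : Rr N (n+1) = Zs N (n+1) := by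
  rw [← U_eq_Z, Rr_succ, U]
  conv_rhs => rw [Finset.sum_range_succ']
  simp only [ee, MvPolynomial.esymm_zero, one_mul, Nat.sub_zero]
  have expand : ∀ k ∈ Finset.range (n+1),
      C ((k : ℝ)+1) * esymm (Fin N) ℝ (k+1) * Rp N (n-k)
      = C (k : ℝ) * esymm (Fin N) ℝ (k+1) * Rp N (n-k)
        + esymm (Fin N) ℝ (k+1) * Rp N (n+1-(k+1)) := by
    intro k hk
    have : n + 1 - (k+1) = n - k := by omega
    rw [this, map_add, map_one]
    ring
  rw [Finset.sum_congr rfl expand, Finset.sum_add_distrib, ← Rp_succ]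
  ring

end
end Aux

/-- `X_{P_n} = Σ_{I ⊨ n} w_I e_I`. -/
theorem stmt2 (n : ℕ) (hn : 1 ≤ n) (N : ℕ) :
    csf (pathG n) N
      = ∑ I : Composition n, MvPolynomial.C (wI I.blocks : ℝ) * eComp N I.blocks := by
  obtain ⟨m, rfl⟩ : ∃ m, n = m + 1 := ⟨n-1, by omega⟩
  rw [Aux.csf_path, Aux.W_eq_Z]
  exact (Aux.Rr_eq_Z N m).symm
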